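/- Let (R, α) be a multiplicative Hom-Lie conformal superalgebra. Then ZDer(R) is an ideal of Der(R): for D₁ ∈ ZDer_{α^k}(R) one has α'(D₁) = D₁ ∘ α ∈ ZDer_{α^{k+1}}(R), and for D₁ ∈ ZDer_{α^k}(R) and D₂ ∈ Der_{α^s}(R) the commutator [D₁_μ D₂] lies in ZDer_{α^{k+s}}(R)[μ]. -/

import Mathlib

noncomputable section

namespace HLCS

open scoped BigOperators

/-- Evaluation at `l : ℂ` of a polynomial (in `λ`) with coefficients in `M`,
encoded as a finitely supported family of coefficients. -/
def pev {M : Type} [AddCommGroup M] [Module ℂ M] (l : ℂ) (p : ℕ →₀ M) : M :=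
  p.sum fun n r => l ^ n • r

/-- Evaluation of a polynomial with coefficients in `M` at an operator `T`
(used for substitutions such as `-λ - ∂`). -/
def pevOp {M : Type} [AddCommGroup M] [Module ℂ M] (T : Module.End ℂ M) (p : ℕ →₀ M) : M :=
  p.sum fun n r => (T ^ n) r

/-- The super sign `(-1)^{|a||b|}` attached to parities `i`, `j`. -/
def sg (i j : ZMod 2) : ℂ := (-1 : ℂ) ^ (i * j).val

/-- The data of a `ℤ₂`-graded `ℂ[∂]`-module `R` with an endomorphism `α` and a
`ℂ`-bilinear `λ`-bracket with values in `ℂ[λ] ⊗ R` (encoded by its coefficients). -/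
structure Data (R : Type) [AddCommGroup R] [Module ℂ R] where
  der : Module.End ℂ R
  alpha : Module.End ℂ R
  G : ZMod 2 → Submodule ℂ R
  br : R →ₗ[ℂ] R →ₗ[ℂ] (ℕ →₀ R)

namespace Data

variable {R : Type} [AddCommGroup R] [Module ℂ R] (S : Data R)

/-- `[a_λ b]` evaluated at `λ = l`. -/
def lb (l : ℂ) (a b : R) : R := pev l (S.br a b)

/-- `[a_{-l-∂} b]` : the bracket with `-l - ∂` substituted for `λ`. -/
def lbOp (l : ℂ) (a b : R) : R :=
  pevOp ((-l) • (1 : Module.End ℂ R) - S.der) (S.br a b)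

/-- Multiplicativity: `α [a_λ b] = [α(a)_λ α(b)]`. -/
def Mult : Prop := ∀ (l : ℂ) (a b : R), S.alpha (S.lb l a b) = S.lb l (S.alpha a) (S.alpha b)

end Data

variable {R : Type} [AddCommGroup R] [Module ℂ R]

/-- `(R, α)` with the given data is a Hom-Lie conformal superalgebra.
All polynomial identities in `λ, μ` are stated by evaluating at arbitrary
complex numbers (which is equivalent, `ℂ` being infinite). -/
structure IsHLCS (S : Data R) : Prop where
  internal : DirectSum.IsInternal S.G
  der_even : ∀ i, ∀ a ∈ S.G i, S.der a ∈ S.G i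
  alpha_even : ∀ i, ∀ a ∈ S.G i, S.alpha a ∈ S.G i
  alpha_der : ∀ a, S.alpha (S.der a) = S.der (S.alpha a)
  br_grade : ∀ i j, ∀ a ∈ S.G i, ∀ b ∈ S.G j, ∀ n, S.br a b n ∈ S.G (i + j)
  conf_left : ∀ (l : ℂ) (a b : R), S.lb l (S.der a) b = -l • S.lb l a b
  conf_right : ∀ (l : ℂ) (a b : R), S.lb l a (S.der b) = S.der (S.lb l a b) + l • S.lb l a b
  skew : ∀ i j, ∀ a ∈ S.G i, ∀ b ∈ S.G j, ∀ l : ℂ,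
    S.lb l a b = (-sg i j) • S.lbOp l b a
  jacobi : ∀ i j, ∀ a ∈ S.G i, ∀ b ∈ S.G j, ∀ (c : R) (l m : ℂ),
    S.lb l (S.alpha a) (S.lb m b c) =
      S.lb (l + m) (S.lb l a b) (S.alpha c) + sg i j • S.lb m (S.alpha b) (S.lb l a c)

end HLCS
namespace HLCS

variable {R : Type} [AddCommGroup R] [Module ℂ R]

/-- A homogeneous conformal linear map of parity `d` on `R`, encoded as the family of
its evaluations `F l : R → R` (`l : ℂ`): it is `ℂ`-linear, polynomial in `l`, and
satisfies `F_λ(∂a) = (∂ + λ) F_λ(a)`. -/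
structure IsConfMap (S : Data R) (d : ZMod 2) (F : ℂ → R → R) : Prop where
  map_add : ∀ (l : ℂ) (a b : R), F l (a + b) = F l a + F l b
  map_smul : ∀ (l c : ℂ) (a : R), F l (c • a) = c • F l a
  poly : ∀ a : R, ∃ p : ℕ →₀ R, ∀ l : ℂ, F l a = pev l p
  conf : ∀ (l : ℂ) (a : R), F l (S.der a) = S.der (F l a) + l • F l a
  grade : ∀ i, ∀ a ∈ S.G i, ∀ l : ℂ, F l a ∈ S.G (i + d)

/-- Membership in `Ω`: a homogeneous conformal linear map commuting with `α`. -/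
def InOmega (S : Data R) (d : ZMod 2) (F : ℂ → R → R) : Prop :=
  IsConfMap S d F ∧ ∀ (l : ℂ) (a : R), F l (S.alpha a) = S.alpha (F l a)

/-- An `α^k`-derivation of parity `d`. -/
def IsDer (S : Data R) (k : ℕ) (d : ZMod 2) (F : ℂ → R → R) : Prop :=
  InOmega S d F ∧ ∀ i, ∀ a ∈ S.G i, ∀ (b : R) (l m : ℂ),
    F l (S.lb m a b) =
      S.lb (l + m) (F l a) ((S.alpha ^ k) b) +
        ((-1 : ℂ) ^ ((i * d).val)) • S.lb m ((S.alpha ^ k) a) (F l b)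

/-- The commutator `[D_λ D']_μ (a) = D_λ(D'_{μ-λ}(a)) - (-1)^{|D||D'|} D'_{μ-λ}(D_λ(a))`,
with `e = (-1)^{|D||D'|}`; first argument `l` is `λ`, second `m` is `μ`. -/
def brkt (e : ℂ) (F G : ℂ → R → R) : ℂ → ℂ → R → R :=
  fun l m a => F l (G (m - l) a) - e • G (m - l) (F l a)

/-- The twist `α'(D) = D ∘ α`. -/
def tw (S : Data R) (F : ℂ → R → R) : ℂ → R → R := fun l a => F l (S.alpha a)

/-- A generalized `α^k`-derivation of parity `d`. -/
def IsGDer (S : Data R) (k : ℕ) (d : ZMod 2) (F : ℂ → R → R) : Prop :=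
  InOmega S d F ∧ ∃ F' F'' : ℂ → R → R, InOmega S d F' ∧ InOmega S d F'' ∧
    ∀ i, ∀ a ∈ S.G i, ∀ (b : R) (l m : ℂ),
      S.lb (l + m) (F m a) ((S.alpha ^ k) b) +
        ((-1 : ℂ) ^ ((d * i).val)) • S.lb l ((S.alpha ^ k) a) (F' m b) = F'' m (S.lb l a b)

/-- An `α^k`-quasiderivation of parity `d`. -/
def IsQDer (S : Data R) (k : ℕ) (d : ZMod 2) (F : ℂ → R → R) : Prop :=
  InOmega S d F ∧ ∃ F' : ℂ → R → R, InOmega S d F' ∧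
    ∀ i, ∀ a ∈ S.G i, ∀ (b : R) (l m : ℂ),
      S.lb (l + m) (F m a) ((S.alpha ^ k) b) +
        ((-1 : ℂ) ^ ((d * i).val)) • S.lb l ((S.alpha ^ k) a) (F m b) = F' m (S.lb l a b)

/-- An `α^k`-centroid of parity `d`. -/
def IsCent (S : Data R) (k : ℕ) (d : ZMod 2) (F : ℂ → R → R) : Prop :=
  InOmega S d F ∧ ∀ i, ∀ a ∈ S.G i, ∀ (b : R) (l m : ℂ),
    S.lb (l + m) (F m a) ((S.alpha ^ k) b) =
      ((-1 : ℂ) ^ ((d * i).val)) • S.lb l ((S.alpha ^ k) a) (F m b) ∧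
    S.lb (l + m) (F m a) ((S.alpha ^ k) b) = F m (S.lb l a b)

/-- An `α^k`-quasicentroid of parity `d`. -/
def IsQC (S : Data R) (k : ℕ) (d : ZMod 2) (F : ℂ → R → R) : Prop :=
  InOmega S d F ∧ ∀ i, ∀ a ∈ S.G i, ∀ (b : R) (l m : ℂ),
    S.lb (l + m) (F m a) ((S.alpha ^ k) b) =
      ((-1 : ℂ) ^ ((d * i).val)) • S.lb l ((S.alpha ^ k) a) (F m b)

/-- An `α^k`-central derivation of parity `d`. -/
def IsZDer (S : Data R) (k : ℕ) (d : ZMod 2) (F : ℂ → R → R) : Prop :=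
  InOmega S d F ∧ ∀ (a b : R) (l m : ℂ),
    S.lb (l + m) (F m a) ((S.alpha ^ k) b) = 0 ∧ F m (S.lb l a b) = 0

/-- Membership in the center `Z(R)`. -/
def IsCentral (S : Data R) (x : R) : Prop := ∀ (l : ℂ) (y : R), S.lb l x y = 0

end HLCS
namespace HLCS

variable {R : Type} [AddCommGroup R] [Module ℂ R]
-- Auxiliary lemmas

/-- `pev l` as a linear map. -/
def pevL (l : ℂ) : (ℕ →₀ R) →ₗ[ℂ] R :=
  Finsupp.lsum ℂ (fun n => l ^ n • (LinearMap.id : R →ₗ[ℂ] R))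

lemma pev_eq_pevL (l : ℂ) (p : ℕ →₀ R) : pev l p = pevL l p := rfl

lemma pev_single (l : ℂ) (n : ℕ) (r : R) :
    pev l (Finsupp.single n r) = l ^ n • r := by
  rw [pev, Finsupp.sum_single_index (by simp)]

lemma pev_map (l : ℂ) (T : R →ₗ[ℂ] R) (p : ℕ →₀ R) :
    T (pev l p) = pev l (Finsupp.mapRange T T.map_zero p) := by
  rw [pev, pev, Finsupp.sum_mapRange_index (by simp), map_finsuppSum]
  simp

lemma pev_shift (l₀ : ℂ) (p : ℕ →₀ R) :
    ∃ q : ℕ →₀ R, ∀ m : ℂ, pev (m - l₀) p = pev m q := by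
  refine ⟨∑ n ∈ p.support, ∑ i ∈ Finset.range (n+1),
      Finsupp.single i (((-l₀) ^ (n - i) * (n.choose i : ℂ)) • p n), fun m => ?_⟩
  rw [pev_eq_pevL, pev_eq_pevL, map_sum]
  rw [show pevL (m - l₀) p = p.sum fun n r => (m - l₀) ^ n • r from rfl, Finsupp.sum]
  refine Finset.sum_congr rfl fun n _ => ?_
  rw [map_sum]
  have : ∀ i ∈ Finset.range (n+1),
      pevL m (Finsupp.single i (((-l₀) ^ (n - i) * (n.choose i : ℂ)) • p n))
        = (m ^ i * ((-l₀) ^ (n - i) * (n.choose i : ℂ))) • p n := by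
    intro i _
    rw [← pev_eq_pevL, pev_single, smul_smul]
  rw [Finset.sum_congr rfl this, ← Finset.sum_smul]
  congr 1
  rw [sub_eq_add_neg, add_pow]
  exact (Finset.sum_congr rfl fun i _ => by ring).symm

variable (S : Data R)

lemma lb_add_left (l : ℂ) (a a' b : R) :
    S.lb l (a + a') b = S.lb l a b + S.lb l a' b := by
  simp [Data.lb, pev_eq_pevL, map_add]

lemma lb_smul_left (l c : ℂ) (a b : R) :
    S.lb l (c • a) b = c • S.lb l a b := by
  simp [Data.lb, pev_eq_pevL, map_smul]

lemma lb_zero_left (l : ℂ) (b : R) : S.lb l 0 b = 0 := by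
  simp [Data.lb, pev_eq_pevL, map_zero]

lemma lb_add_right (l : ℂ) (a b b' : R) :
    S.lb l a (b + b') = S.lb l a b + S.lb l a b' := by
  simp [Data.lb, pev_eq_pevL, map_add]

lemma lb_smul_right (l c : ℂ) (a b : R) :
    S.lb l a (c • b) = c • S.lb l a b := by
  simp [Data.lb, pev_eq_pevL, map_smul]

lemma lb_zero_right (l : ℂ) (a : R) : S.lb l a 0 = 0 := by
  simp [Data.lb, pev_eq_pevL, map_zero]


lemma lb_sub_left (l : ℂ) (a a' b : R) :
    S.lb l (a - a') b = S.lb l a b - S.lb l a' b := by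
  simp [Data.lb, pev_eq_pevL, map_sub]

/-- A conformal map evaluated at `l`, as a linear map. -/
def cmL {d : ZMod 2} {F : ℂ → R → R} (h : IsConfMap S d F) (l : ℂ) : R →ₗ[ℂ] R :=
  { toFun := F l, map_add' := h.map_add l, map_smul' := h.map_smul l }

lemma cmL_apply {d : ZMod 2} {F : ℂ → R → R} (h : IsConfMap S d F) (l : ℂ) (a : R) :
    cmL S h l a = F l a := rfl

lemma cm_zero {d : ZMod 2} {F : ℂ → R → R} (h : IsConfMap S d F) (l : ℂ) :
    F l 0 = 0 := (cmL S h l).map_zero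

lemma comm_pow {F : ℂ → R → R} (hc : ∀ (l : ℂ) (a : R), F l (S.alpha a) = S.alpha (F l a)) :
    ∀ (n : ℕ) (l : ℂ) (a : R), F l ((S.alpha ^ n) a) = (S.alpha ^ n) (F l a) := by
  intro n
  induction n with
  | zero => intro l a; simp
  | succ n ih =>
    intro l a
    rw [pow_succ, Module.End.mul_apply, Module.End.mul_apply, ih, hc]

lemma eq_zero_of_graded (hS : IsHLCS S) (φ : R → R)
    (hadd : ∀ x y, φ (x + y) = φ x + φ y) (h0 : φ 0 = 0)
    (h : ∀ i, ∀ x ∈ S.G i, φ x = 0) : ∀ a, φ a = 0 := by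
  intro a
  have ha : a ∈ ⨆ i, S.G i := by
    rw [hS.internal.submodule_iSup_eq_top]; trivial
  exact Submodule.iSup_induction (motive := fun x => φ x = 0) S.G ha h h0
    (fun x y hx hy => by show φ (x+y) = 0; rw [hadd, hx, hy, add_zero])

/-- For a multiplicative Hom-Lie conformal superalgebra `(R, α)`,
`ZDer(R)` is an ideal of `Der(R)`: the twist `α'(D₁) = D₁ ∘ α` sends
`ZDer_{α^k}(R)` into `ZDer_{α^{k+1}}(R)`, and the commutator of a central
derivation `D₁ ∈ ZDer_{α^k}(R)` with a derivation `D₂ ∈ Der_{α^s}(R)` lies in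
`ZDer_{α^{k+s}}(R)[μ]`. -/
theorem zder_ideal (S : Data R) (hS : IsHLCS S) (hmult : S.Mult) :
    (∀ (k : ℕ) (d : ZMod 2) (F : ℂ → R → R),
      IsZDer S k d F → IsZDer S (k + 1) d (tw S F)) ∧
    (∀ (k s : ℕ) (d d' : ZMod 2) (F G : ℂ → R → R),
      IsZDer S k d F → IsDer S s d' G →
        ∀ l : ℂ, IsZDer S (k + s) (d + d') (brkt ((-1 : ℂ) ^ ((d * d').val)) F G l)) := by
  constructor
  · rintro k d F ⟨⟨hFcm, hFc⟩, hFz⟩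
    refine ⟨⟨⟨?_, ?_, ?_, ?_, ?_⟩, ?_⟩, ?_⟩
    · intro l a b
      show F l (S.alpha (a + b)) = F l (S.alpha a) + F l (S.alpha b)
      rw [map_add, hFcm.map_add]
    · intro l c a
      show F l (S.alpha (c • a)) = c • F l (S.alpha a)
      rw [map_smul, hFcm.map_smul]
    · intro a; exact hFcm.poly (S.alpha a)
    · intro l a
      show F l (S.alpha (S.der a)) = S.der (F l (S.alpha a)) + l • F l (S.alpha a)
      rw [hS.alpha_der, hFcm.conf]
    · intro i a ha l
      exact hFcm.grade i _ (hS.alpha_even i a ha) l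
    · intro l a
      show F l (S.alpha (S.alpha a)) = S.alpha (F l (S.alpha a))
      rw [hFc]
    · intro a b l m
      constructor
      · show S.lb (l + m) (F m (S.alpha a)) ((S.alpha ^ (k + 1)) b) = 0
        rw [show ((S.alpha ^ (k + 1)) b) = (S.alpha ^ k) (S.alpha b) by
          rw [pow_succ, Module.End.mul_apply]]
        exact (hFz (S.alpha a) (S.alpha b) l m).1
      · show F m (S.alpha (S.lb l a b)) = 0
        rw [hmult]
        exact (hFz (S.alpha a) (S.alpha b) l m).2
  · rintro k s d d' F G ⟨⟨hFcm, hFc⟩, hFz⟩ ⟨⟨hGcm, hGc⟩, hGd⟩ l₀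
    set e : ℂ := ((-1 : ℂ) ^ ((d * d').val)) with he
    have hF0 : ∀ l : ℂ, F l (0 : R) = 0 := fun l => cm_zero S hFcm l
    have hG0 : ∀ l : ℂ, G l (0 : R) = 0 := fun l => cm_zero S hGcm l
    -- key vanishing facts for F
    have hFbr : ∀ (x y : R) (p : ℂ), S.lb p (F l₀ x) ((S.alpha ^ k) y) = 0 := by
      intro x y p
      have := (hFz x y (p - l₀) l₀).1
      rwa [show p - l₀ + l₀ = p by ring] at this
    refine ⟨⟨⟨?_, ?_, ?_, ?_, ?_⟩, ?_⟩, ?_⟩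
    · intro l a b
      show F l₀ (G (l - l₀) (a + b)) - e • G (l - l₀) (F l₀ (a + b)) = _
      rw [hGcm.map_add, hFcm.map_add, hFcm.map_add, hGcm.map_add, smul_add]
      show _ = F l₀ (G (l - l₀) a) - e • G (l - l₀) (F l₀ a) +
        (F l₀ (G (l - l₀) b) - e • G (l - l₀) (F l₀ b))
      abel
    · intro l c a
      show F l₀ (G (l - l₀) (c • a)) - e • G (l - l₀) (F l₀ (c • a)) = _
      rw [hGcm.map_smul, hFcm.map_smul, hFcm.map_smul, hGcm.map_smul, smul_comm e c,
        ← smul_sub]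
      rfl
    · intro a
      obtain ⟨p1, hp1⟩ := hGcm.poly a
      obtain ⟨q1, hq1⟩ := pev_shift l₀ p1
      obtain ⟨p2, hp2⟩ := hGcm.poly (F l₀ a)
      obtain ⟨q2, hq2⟩ := pev_shift l₀ p2
      refine ⟨Finsupp.mapRange (cmL S hFcm l₀) (map_zero _) q1 - e • q2, fun m => ?_⟩
      show F l₀ (G (m - l₀) a) - e • G (m - l₀) (F l₀ a) = _
      rw [hp1 (m - l₀), hq1 m, hp2 (m - l₀), hq2 m,
        show F l₀ (pev m q1) = cmL S hFcm l₀ (pev m q1) from rfl,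
        pev_map, pev_eq_pevL, pev_eq_pevL, pev_eq_pevL, map_sub, map_smul]
    · intro l a
      show F l₀ (G (l - l₀) (S.der a)) - e • G (l - l₀) (F l₀ (S.der a)) = _
      rw [hGcm.conf, hFcm.map_add, hFcm.map_smul, hFcm.conf, hFcm.conf l₀ a,
        hGcm.map_add, hGcm.map_smul, hGcm.conf]
      show _ = S.der (F l₀ (G (l - l₀) a) - e • G (l - l₀) (F l₀ a)) +
        l • (F l₀ (G (l - l₀) a) - e • G (l - l₀) (F l₀ a))
      simp only [map_sub, map_add, map_smul, smul_sub, smul_add]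
      module
    · intro i a ha l
      have h2 : F l₀ (G (l - l₀) a) ∈ S.G (i + d' + d) :=
        hFcm.grade _ _ (hGcm.grade i a ha _) _
      have h4 : G (l - l₀) (F l₀ a) ∈ S.G (i + d + d') :=
        hGcm.grade _ _ (hFcm.grade i a ha _) _
      show F l₀ (G (l - l₀) a) - e • G (l - l₀) (F l₀ a) ∈ S.G (i + (d + d'))
      have e1 : i + d' + d = i + (d + d') := by ring
      have e2 : i + d + d' = i + (d + d') := by ring
      exact Submodule.sub_mem _ (e1 ▸ h2) (Submodule.smul_mem _ e (e2 ▸ h4))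
    · intro l a
      show F l₀ (G (l - l₀) (S.alpha a)) - e • G (l - l₀) (F l₀ (S.alpha a)) = _
      rw [hGc, hFc, hFc, hGc]
      show _ = S.alpha (F l₀ (G (l - l₀) a) - e • G (l - l₀) (F l₀ a))
      rw [map_sub, map_smul]
    · intro a b l m
      set ν : ℂ := m - l₀ with hν
      constructor
      · show S.lb (l + m) (F l₀ (G ν a) - e • G ν (F l₀ a)) ((S.alpha ^ (k + s)) b) = 0
        rw [lb_sub_left, lb_smul_left]
        have main : ∀ x, S.lb (l + m) (G ν (F l₀ x)) ((S.alpha ^ (k + s)) b) = 0 := by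
          refine eq_zero_of_graded S hS _ (fun x y => ?_) ?_ (fun i x hx => ?_)
          · rw [hFcm.map_add, hGcm.map_add, lb_add_left]
          · rw [hF0, hG0, lb_zero_left]
          · have hc : F l₀ x ∈ S.G (i + d) := hFcm.grade i x hx l₀
            have key := hGd (i + d) (F l₀ x) hc ((S.alpha ^ k) b) ν (l + m - ν)
            rw [show S.lb (l + m - ν) (F l₀ x) ((S.alpha ^ k) b) = 0 from hFbr x b _,
              hG0] at key
            rw [← comm_pow S hFc s, comm_pow S hGc k, hFbr] at key
            rw [show ν + (l + m - ν) = l + m by ring] at key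
            rw [show (S.alpha ^ s) ((S.alpha ^ k) b) = (S.alpha ^ (k + s)) b by
              rw [Nat.add_comm, pow_add, Module.End.mul_apply]] at key
            rw [smul_zero, add_zero] at key
            exact key.symm
        rw [main a, smul_zero, sub_zero,
          show (S.alpha ^ (k + s)) b = (S.alpha ^ k) ((S.alpha ^ s) b) by
            rw [pow_add, Module.End.mul_apply],
          hFbr]
      · show F l₀ (G ν (S.lb l a b)) - e • G ν (F l₀ (S.lb l a b)) = 0
        rw [(hFz a b l l₀).2, hG0, smul_zero, sub_zero]
        have main : ∀ x, F l₀ (G ν (S.lb l x b)) = 0 := by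
          refine eq_zero_of_graded S hS _ (fun x y => ?_) ?_ (fun i x hx => ?_)
          · rw [lb_add_left, hGcm.map_add, hFcm.map_add]
          · rw [lb_zero_left, hG0, hF0]
          · have key := hGd i x hx b ν l
            rw [key, hFcm.map_add, hFcm.map_smul, (hFz _ _ _ l₀).2, (hFz _ _ _ l₀).2,
              smul_zero, add_zero]
        exact main a

end HLCS
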